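/- If H and H̃ are Hermitian positive definite n×n matrices with η = ‖H^{-1/2}(H - H̃)H^{-1/2}‖₂ < 1, then for all vectors x, y ∈ ℂⁿ, |x*(H - H̃)y| ≤ (η/√(1-η)) · √(x*Hx · y*H̃y). -/

import Mathlib

open Matrix
open scoped ComplexOrder
set_option maxHeartbeats 1000000

open Matrix
open scoped ComplexOrder

noncomputable def specNorm {n : Type*} [Fintype n] [DecidableEq n] (A : Matrix n n ℂ) : ℝ :=
  ‖Matrix.toEuclideanCLM (𝕜 := ℂ) A‖

noncomputable def frobNorm {m k : Type*} [Fintype m] [Fintype k] (A : Matrix m k ℂ) : ℝ :=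
  Real.sqrt (∑ i, ∑ j, ‖A i j‖ ^ 2)

lemma aux_abs_dot_le {n : ℕ} (M : Matrix (Fin n) (Fin n) ℂ) (u v : Fin n → ℂ) :
    ‖star u ⬝ᵥ (M *ᵥ v)‖ ≤ specNorm M *
      (‖(WithLp.equiv 2 (Fin n → ℂ)).symm u‖ * ‖(WithLp.equiv 2 (Fin n → ℂ)).symm v‖) := by
  have h1 : star u ⬝ᵥ (M *ᵥ v) =
      inner ℂ ((WithLp.equiv 2 (Fin n → ℂ)).symm u)
        (Matrix.toEuclideanCLM (𝕜 := ℂ) M ((WithLp.equiv 2 (Fin n → ℂ)).symm v)) := by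
    show _ = (M *ᵥ v) ⬝ᵥ star u
    rw [dotProduct_comm]
  rw [h1]
  calc ‖inner ℂ ((WithLp.equiv 2 (Fin n → ℂ)).symm u)
        (Matrix.toEuclideanCLM (𝕜 := ℂ) M ((WithLp.equiv 2 (Fin n → ℂ)).symm v))‖
      ≤ ‖(WithLp.equiv 2 (Fin n → ℂ)).symm u‖ *
        ‖Matrix.toEuclideanCLM (𝕜 := ℂ) M ((WithLp.equiv 2 (Fin n → ℂ)).symm v)‖ :=
        norm_inner_le_norm _ _
    _ ≤ ‖(WithLp.equiv 2 (Fin n → ℂ)).symm u‖ *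
        (specNorm M * ‖(WithLp.equiv 2 (Fin n → ℂ)).symm v‖) := by
        gcongr
        exact (Matrix.toEuclideanCLM (𝕜 := ℂ) M).le_opNorm _
    _ = _ := by ring

lemma aux_norm_sq {n : ℕ} (u : Fin n → ℂ) :
    ‖(WithLp.equiv 2 (Fin n → ℂ)).symm u‖ ^ 2 = (star u ⬝ᵥ u).re := by
  rw [← inner_self_eq_norm_sq (𝕜 := ℂ) ((WithLp.equiv 2 (Fin n → ℂ)).symm u),
    EuclideanSpace.inner_eq_star_dotProduct]
  show RCLike.re (u ⬝ᵥ star u) = _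
  rw [dotProduct_comm]
  rfl

noncomputable def psqrt {n : Type*} [Fintype n] [DecidableEq n] {A : Matrix n n ℂ}
    (hA : A.PosDef) : Matrix n n ℂ :=
  (hA.posSemidef.1.eigenvectorUnitary : Matrix n n ℂ) *
    diagonal ((↑) ∘ (Real.sqrt ·) ∘ hA.posSemidef.1.eigenvalues) *
    (star hA.posSemidef.1.eigenvectorUnitary : Matrix n n ℂ)

theorem stmt_1 {n : ℕ} (H Ht : Matrix (Fin n) (Fin n) ℂ)
    (hH : H.PosDef) (hHt : Ht.PosDef) (η : ℝ)
    (hη : η = specNorm ((psqrt hH)⁻¹ * (H - Ht) * (psqrt hH)⁻¹)) (hlt : η < 1) :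
    ∀ x y : Fin n → ℂ,
      ‖star x ⬝ᵥ ((H - Ht) *ᵥ y)‖ ≤
        η / Real.sqrt (1 - η) *
          Real.sqrt ((star x ⬝ᵥ (H *ᵥ x)).re * (star y ⬝ᵥ (Ht *ᵥ y)).re) := by
  intro x y
  set R := psqrt hH with hRdef
  have hRps : R.PosSemidef := by
    have hD : (diagonal ((↑) ∘ (Real.sqrt ·) ∘ hH.posSemidef.1.eigenvalues) :
        Matrix (Fin n) (Fin n) ℂ).PosSemidef :=
      PosSemidef.diagonal (fun i => by simp [Real.sqrt_nonneg])
    have := hD.mul_mul_conjTranspose_same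
      (hH.posSemidef.1.eigenvectorUnitary : Matrix (Fin n) (Fin n) ℂ)
    rw [hRdef, psqrt]
    convert this using 1
    rw [star_eq_conjTranspose]
  have hR2 : R * R = H := by
    have hUU := Unitary.coe_star_mul_self hH.posSemidef.1.eigenvectorUnitary
    have hD : (diagonal ((↑) ∘ (Real.sqrt ·) ∘ hH.posSemidef.1.eigenvalues) :
        Matrix (Fin n) (Fin n) ℂ) * diagonal ((↑) ∘ (Real.sqrt ·) ∘ hH.posSemidef.1.eigenvalues)
        = diagonal (RCLike.ofReal ∘ hH.posSemidef.1.eigenvalues) := by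
      rw [diagonal_mul_diagonal]; congr 1; funext i
      simp only [Function.comp_apply]
      rw [← Complex.ofReal_mul, Real.mul_self_sqrt (hH.posSemidef.eigenvalues_nonneg i)]; rfl
    have hS := hH.posSemidef.1.spectral_theorem
    rw [Unitary.conjStarAlgAut_apply] at hS
    refine Eq.trans ?_ hS.symm
    rw [hRdef, psqrt, ← hD]
    simp only [Matrix.mul_assoc]
    congr 2
    rw [← Matrix.mul_assoc, hUU, Matrix.one_mul]
  have hRH : Rᴴ = R := hRps.1
  -- R is positive definite
  have hRpd : R.PosDef := by
    rw [hRps.posDef_iff_det_ne_zero]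
    intro h0
    have := hH.det_pos
    rw [← hR2, det_mul, h0, zero_mul] at this
    exact lt_irrefl _ this
  have hRu : IsUnit R.det := hRpd.det_pos.ne'.isUnit
  have hRinv : R⁻¹ * R = 1 := nonsing_inv_mul R hRu
  have hRinv' : R * R⁻¹ = 1 := mul_nonsing_inv R hRu
  set M := R⁻¹ * (H - Ht) * R⁻¹ with hMdef
  set u := R *ᵥ x with hu
  set v := R *ᵥ y with hv
  set a := ‖(WithLp.equiv 2 (Fin n → ℂ)).symm u‖ with ha
  set b := ‖(WithLp.equiv 2 (Fin n → ℂ)).symm v‖ with hb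
  have ha0 : 0 ≤ a := norm_nonneg _
  have hb0 : 0 ≤ b := norm_nonneg _
  -- key identity: for any z w, star (R z) ⬝ᵥ M *ᵥ (R w) = star z ⬝ᵥ (H - Ht) *ᵥ w
  have key : ∀ z w : Fin n → ℂ,
      star (R *ᵥ z) ⬝ᵥ (M *ᵥ (R *ᵥ w)) = star z ⬝ᵥ ((H - Ht) *ᵥ w) := by
    intro z w
    rw [star_mulVec, hRH, mulVec_mulVec, ← dotProduct_mulVec, mulVec_mulVec]
    refine congrArg (fun A => star z ⬝ᵥ (A *ᵥ w)) ?_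
    rw [hMdef]
    have h1 : R⁻¹ * (H - Ht) * R⁻¹ * R = R⁻¹ * (H - Ht) := by
      rw [Matrix.mul_assoc, hRinv, Matrix.mul_one]
    rw [h1, ← Matrix.mul_assoc, hRinv', Matrix.one_mul]
  -- step 1 : the dot products as norms
  have hax : a ^ 2 = (star x ⬝ᵥ (H *ᵥ x)).re := by
    rw [ha, aux_norm_sq, hu, star_mulVec, hRH, ← dotProduct_mulVec, mulVec_mulVec, hR2]
  have hby : b ^ 2 = (star y ⬝ᵥ (H *ᵥ y)).re := by
    rw [hb, aux_norm_sq, hv, star_mulVec, hRH, ← dotProduct_mulVec, mulVec_mulVec, hR2]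
  have hη0 : 0 ≤ η := hη ▸ norm_nonneg _
  have h1η : 0 < 1 - η := by linarith
  -- bound on the main term
  have hmain : ‖star x ⬝ᵥ ((H - Ht) *ᵥ y)‖ ≤ η * (a * b) := by
    rw [← key x y, hη]
    exact aux_abs_dot_le M u v
  -- lower bound for y* Ht y
  have hHty : (1 - η) * b ^ 2 ≤ (star y ⬝ᵥ (Ht *ᵥ y)).re := by
    have hsplit : (star y ⬝ᵥ (Ht *ᵥ y)).re =
        (star y ⬝ᵥ (H *ᵥ y)).re - (star y ⬝ᵥ ((H - Ht) *ᵥ y)).re := by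
      rw [sub_mulVec, dotProduct_sub, Complex.sub_re]
      ring
    have hE : (star y ⬝ᵥ ((H - Ht) *ᵥ y)).re ≤ η * b ^ 2 := by
      calc (star y ⬝ᵥ ((H - Ht) *ᵥ y)).re ≤ ‖star y ⬝ᵥ ((H - Ht) *ᵥ y)‖ :=
            Complex.re_le_norm _
        _ ≤ η * (b * b) := by rw [← key y y, hη]; exact aux_abs_dot_le M v v
        _ = η * b ^ 2 := by ring
    rw [hsplit, ← hby]
    nlinarith
  -- final arithmetic
  have hc0 : (0:ℝ) ≤ (star y ⬝ᵥ (Ht *ᵥ y)).re := le_trans (by positivity) hHty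
  have hs : Real.sqrt (a ^ 2 * ((1 - η) * b ^ 2)) ≤
      Real.sqrt ((star x ⬝ᵥ (H *ᵥ x)).re * (star y ⬝ᵥ (Ht *ᵥ y)).re) := by
    apply Real.sqrt_le_sqrt
    rw [← hax]
    exact mul_le_mul_of_nonneg_left hHty (by positivity)
  have hseq : Real.sqrt (a ^ 2 * ((1 - η) * b ^ 2)) = a * (Real.sqrt (1 - η) * b) := by
    rw [Real.sqrt_mul (by positivity), Real.sqrt_mul h1η.le,
      Real.sqrt_sq ha0, Real.sqrt_sq hb0]
  have hsq1η : 0 < Real.sqrt (1 - η) := Real.sqrt_pos.2 h1η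
  calc ‖star x ⬝ᵥ ((H - Ht) *ᵥ y)‖ ≤ η * (a * b) := hmain
    _ = η / Real.sqrt (1 - η) * (a * (Real.sqrt (1 - η) * b)) := by
        field_simp
    _ = η / Real.sqrt (1 - η) * Real.sqrt (a ^ 2 * ((1 - η) * b ^ 2)) := by rw [hseq]
    _ ≤ η / Real.sqrt (1 - η) *
        Real.sqrt ((star x ⬝ᵥ (H *ᵥ x)).re * (star y ⬝ᵥ (Ht *ᵥ y)).re) := by
        apply mul_le_mul_of_nonneg_left hs (by positivity)
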